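/- There exists a compactness-preserving surjection f : [0,1] → ω+1 (the ordinal space ω+1, i.e., a convergent sequence with its limit) such that the square f × f : [0,1]² → (ω+1)² is not compactness-preserving. -/

import Mathlib

open Set Filter Topology

namespace CompPAux

/-- the unit interval as a subtype -/
abbrev I := Set.Icc (0:ℝ) 1

lemma smem (n : ℕ) : (1 / ((n:ℝ) + 3)) ∈ Set.Icc (0:ℝ) 1 := by
  constructor
  · positivity
  · rw [div_le_one (by positivity)]
    linarith [Nat.cast_nonneg (α := ℝ) n]

lemma tmem (n : ℕ) : (1/2 + 1 / ((n:ℝ) + 3)) ∈ Set.Icc (0:ℝ) 1 := by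
  have h1 : (0:ℝ) < (n:ℝ) + 3 := by positivity
  have h2 : 1 / ((n:ℝ) + 3) ≤ 1/3 := by
    rw [div_le_div_iff₀ h1 (by norm_num)]
    linarith [Nat.cast_nonneg (α := ℝ) n]
  constructor
  · positivity
  · linarith

/-- points mapping to `n+2` -/
noncomputable def s (n : ℕ) : I := ⟨1 / ((n:ℝ) + 3), smem n⟩

/-- points mapping to `0`, converging to `1/2` -/
noncomputable def t (n : ℕ) : I := ⟨1/2 + 1 / ((n:ℝ) + 3), tmem n⟩

noncomputable def zpt : I := ⟨0, by constructor <;> norm_num⟩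
noncomputable def hpt : I := ⟨1/2, by constructor <;> norm_num⟩

lemma s_inj : Function.Injective fun n : ℕ => 1 / ((n:ℝ) + 3) := by
  intro m n h
  simp only at h
  have hm : (0:ℝ) < (m:ℝ) + 3 := by positivity
  have hn : (0:ℝ) < (n:ℝ) + 3 := by positivity
  rw [div_eq_div_iff hm.ne' hn.ne'] at h
  have : (m:ℝ) = n := by linarith
  exact_mod_cast this

open Classical in
/-- The function -/
noncomputable def g : I → ℕ∞ := fun x =>
  if x.val = 0 then ⊤
  else if x.val = 1/2 then 1
  else if h : ∃ n : ℕ, x.val = 1 / ((n:ℝ) + 3) then ((h.choose + 2 : ℕ) : ℕ∞)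
  else 0

lemma g_zpt : g zpt = ⊤ := by simp [g, zpt]

lemma g_hpt : g hpt = 1 := by
  simp only [g, hpt]
  norm_num

lemma s_val_ne_zero (n : ℕ) : (s n).val ≠ 0 := by
  have : (0:ℝ) < 1 / ((n:ℝ) + 3) := by positivity
  exact ne_of_gt this

lemma s_val_ne_half (n : ℕ) : (s n).val ≠ 1/2 := by
  have h1 : (0:ℝ) < (n:ℝ) + 3 := by positivity
  have h2 : 1 / ((n:ℝ) + 3) ≤ 1/3 := by
    rw [div_le_div_iff₀ h1 (by norm_num)]
    linarith [Nat.cast_nonneg (α := ℝ) n]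
  intro h
  rw [show (s n).val = 1 / ((n:ℝ)+3) from rfl] at h
  norm_num [h] at h2

lemma g_s (n : ℕ) : g (s n) = ((n + 2 : ℕ) : ℕ∞) := by
  have hex : ∃ m : ℕ, (s n).val = 1 / ((m:ℝ) + 3) := ⟨n, rfl⟩
  simp only [g, s_val_ne_zero n, s_val_ne_half n, if_false, hex, dif_pos]
  have h1 := hex.choose_spec
  have h2 : hex.choose = n := s_inj h1.symm
  rw [h2]

lemma t_val_gt (n : ℕ) : (1:ℝ)/2 < (t n).val := by
  have : (0:ℝ) < 1 / ((n:ℝ) + 3) := by positivity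
  show (1:ℝ)/2 < 1/2 + 1 / ((n:ℝ) + 3)
  linarith

lemma g_t (n : ℕ) : g (t n) = 0 := by
  have h0 : (t n).val ≠ 0 := by have := t_val_gt n; intro h; rw [h] at this; norm_num at this
  have hh : (t n).val ≠ 1/2 := ne_of_gt (t_val_gt n)
  have hex : ¬ ∃ m : ℕ, (t n).val = 1 / ((m:ℝ) + 3) := by
    rintro ⟨m, hm⟩
    have h1 : (0:ℝ) < (m:ℝ) + 3 := by positivity
    have h2 : 1 / ((m:ℝ) + 3) ≤ 1/3 := by
      rw [div_le_div_iff₀ h1 (by norm_num)]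
      linarith [Nat.cast_nonneg (α := ℝ) m]
    have := t_val_gt n
    rw [hm] at this
    linarith
  simp only [g]
  rw [if_neg h0, if_neg hh, dif_neg hex]

/-- Any subset of ℕ∞ containing ⊤ is compact. -/
lemma isCompact_of_top_mem {S : Set ℕ∞} (h : ⊤ ∈ S) : IsCompact S := by
  have hcl : IsClosed S := by
    rw [← isOpen_compl_iff, isOpen_iff_mem_nhds]
    intro x hx
    have hxt : x ≠ ⊤ := fun e => hx (e ▸ h)
    rw [ENat.mem_nhds_iff hxt]
    exact hx
  exact hcl.isCompact

lemma g_surj : Function.Surjective g := by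
  intro y
  match y with
  | ⊤ => exact ⟨zpt, g_zpt⟩
  | (k : ℕ) =>
    match k with
    | 0 => exact ⟨t 0, g_t 0⟩
    | 1 => exact ⟨hpt, g_hpt⟩
    | (n + 2) => exact ⟨s n, g_s n⟩

lemma g_val_cases (x : I) : g x = ⊤ ∨ g x = 1 ∨ g x = 0 ∨ ∃ n : ℕ, x = s n := by
  by_cases h0 : x.val = 0
  · left; simp [g, h0]
  by_cases hh : x.val = 1/2
  · right; left; simp [g, h0, hh]
  by_cases hex : ∃ n : ℕ, x.val = 1 / ((n:ℝ) + 3)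
  · right; right; right
    obtain ⟨n, hn⟩ := hex
    exact ⟨n, Subtype.ext hn⟩
  · right; right; left
    simp only [g]
    rw [if_neg h0, if_neg hh, dif_neg hex]

lemma g_preserves_compact (K : Set I) (hK : IsCompact K) : IsCompact (g '' K) := by
  by_cases h0 : zpt ∈ K
  · exact isCompact_of_top_mem ⟨zpt, h0, g_zpt⟩
  · -- 0 ∉ K : K is bounded away from 0, so image finite
    have hcl : IsClosed K := hK.isClosed
    have hop : IsOpen Kᶜ := hcl.isOpen_compl
    obtain ⟨ε, hε, hball⟩ := Metric.isOpen_iff.mp hop zpt h0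
    have hlb : ∀ x ∈ K, ε ≤ x.val := by
      intro x hx
      by_contra hlt
      push_neg at hlt
      have : x ∈ Metric.ball zpt ε := by
        rw [Metric.mem_ball]
        have : dist x zpt = |x.val - 0| := rfl
        rw [this, sub_zero, abs_of_nonneg x.2.1]
        exact hlt
      exact (hball this) hx
    obtain ⟨N, hN⟩ := exists_nat_gt (1/ε)
    have hsub : g '' K ⊆ insert ⊤ (insert 1 (insert 0
        ((fun n : ℕ => ((n + 2 : ℕ) : ℕ∞)) '' Set.Iic N))) := by
      rintro y ⟨x, hx, rfl⟩
      rcases g_val_cases x with h | h | h | ⟨n, rfl⟩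
      · exact Or.inl h
      · exact Or.inr (Or.inl h)
      · exact Or.inr (Or.inr (Or.inl h))
      · refine Or.inr (Or.inr (Or.inr ⟨n, ?_, (g_s n).symm⟩))
        have hle : ε ≤ 1 / ((n:ℝ) + 3) := hlb _ hx
        have hn3 : (0:ℝ) < (n:ℝ) + 3 := by positivity
        have h1 : (n:ℝ) + 3 ≤ 1/ε := by
          rw [le_div_iff₀ hε]
          calc ((n:ℝ) + 3) * ε ≤ ((n:ℝ) + 3) * (1 / ((n:ℝ)+3)) := by
                exact mul_le_mul_of_nonneg_left hle (le_of_lt hn3)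
            _ = 1 := by field_simp
        have : (n:ℝ) < N := by linarith
        exact_mod_cast le_of_lt this
    have hfin : (insert ⊤ (insert 1 (insert (0:ℕ∞)
        ((fun n : ℕ => ((n + 2 : ℕ) : ℕ∞)) '' Set.Iic N)))).Finite :=
      (((Set.finite_Iic N).image _).insert _).insert _ |>.insert _
    exact (hfin.subset hsub).isCompact

lemma tendsto_aux : Tendsto (fun n : ℕ => 1 / ((n:ℝ) + 3)) atTop (𝓝 0) := by
  have h1 : Tendsto (fun n : ℕ => n + 3) atTop atTop := tendsto_add_atTop_nat 3
  have h2 := (tendsto_one_div_atTop_nhds_zero_nat (𝕜 := ℝ)).comp h1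
  have heq : (fun n : ℕ => 1 / ((n:ℝ) + 3)) = (fun m : ℕ => 1/(m:ℝ)) ∘ (fun n => n + 3) := by
    funext n
    simp only [Function.comp]
    push_cast
    ring
  rw [heq]
  exact h2

lemma tendsto_s : Tendsto (fun n => s n) atTop (𝓝 zpt) := by
  rw [Topology.IsEmbedding.subtypeVal.tendsto_nhds_iff]
  simpa [Function.comp_def, s, zpt] using tendsto_aux

lemma tendsto_t : Tendsto (fun n => t n) atTop (𝓝 hpt) := by
  rw [Topology.IsEmbedding.subtypeVal.tendsto_nhds_iff]
  have : Tendsto (fun n : ℕ => 1/2 + 1 / ((n:ℝ) + 3)) atTop (𝓝 (1/2 + 0)) :=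
    tendsto_const_nhds.add tendsto_aux
  simpa [Function.comp_def, t, hpt] using this

lemma bad_square : ¬ ∀ K : Set (I × I), IsCompact K → IsCompact (Prod.map g g '' K) := by
  intro hall
  set K : Set (I × I) := insert (hpt, zpt) (Set.range fun n => (t n, s n)) with hKdef
  have hKcomp : IsCompact K :=
    (tendsto_t.prodMk_nhds tendsto_s).isCompact_insert_range
  have himg := hall K hKcomp
  -- the image
  have himg_eq : Prod.map g g '' K =
      insert ((1 : ℕ∞), (⊤ : ℕ∞)) (Set.range fun n : ℕ => ((0 : ℕ∞), ((n + 2 : ℕ) : ℕ∞))) := by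
    rw [hKdef, Set.image_insert_eq, ← Set.range_comp]
    congr 1
    · simp [Prod.map, g_hpt, g_zpt]
    · congr 1 with n
      all_goals simp [Function.comp_def, Prod.map, g_t, g_s]
  rw [himg_eq] at himg
  have hclosed : IsClosed (insert ((1 : ℕ∞), (⊤ : ℕ∞))
      (Set.range fun n : ℕ => ((0 : ℕ∞), ((n + 2 : ℕ) : ℕ∞)))) := himg.isClosed
  have hmem : ((0 : ℕ∞), (⊤ : ℕ∞)) ∈ insert ((1 : ℕ∞), (⊤ : ℕ∞))
      (Set.range fun n : ℕ => ((0 : ℕ∞), ((n + 2 : ℕ) : ℕ∞))) := by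
    rw [← hclosed.closure_eq]
    have htend : Tendsto (fun n : ℕ => ((0 : ℕ∞), ((n + 2 : ℕ) : ℕ∞))) atTop
        (𝓝 ((0 : ℕ∞), (⊤ : ℕ∞))) := by
      refine Tendsto.prodMk_nhds tendsto_const_nhds ?_
      rw [ENat.tendsto_nhds_top_iff_natCast_lt]
      intro m
      filter_upwards [eventually_ge_atTop m] with n hn
      exact_mod_cast Nat.lt_succ_of_le (le_trans hn (Nat.le_succ n))
    exact mem_closure_of_tendsto htend (Eventually.of_forall fun n => Or.inr ⟨n, rfl⟩)
  rcases hmem with h | ⟨n, hn⟩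
  · have : (0:ℕ∞) = 1 := congrArg Prod.fst h
    exact absurd this (by norm_num)
  · have h2 : ((n + 2 : ℕ) : ℕ∞) = ⊤ := congrArg Prod.snd hn
    exact (ENat.coe_ne_top _) h2

end CompPAux

theorem exists_compP_surjection_square_not_compP :
    ∃ f : Set.Icc (0:ℝ) 1 → ℕ∞,
      Function.Surjective f ∧
      (∀ K : Set (Set.Icc (0:ℝ) 1), IsCompact K → IsCompact (f '' K)) ∧
      ¬ ∀ K : Set (Set.Icc (0:ℝ) 1 × Set.Icc (0:ℝ) 1), IsCompact K →
          IsCompact (Prod.map f f '' K) := by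
  exact ⟨CompPAux.g, CompPAux.g_surj, CompPAux.g_preserves_compact, CompPAux.bad_square⟩
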